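/- (Lemma 2.1(i), case b_i = b_{i+m}.) Suppose c : (Z^2/NZ^2) × Z^2 → C and b ∈ C satisfy, for all k, n ∈ N·Z^2 and all ∂ ∈ C∂_1 ⊕ C∂_2: ⟨∂, m⟩ c(k+m, i+n) = ⟨∂, α+i+m+n+b·k⟩ c(m, i+n) − ⟨∂, α+i+n+b·k⟩ c(m, i+k+n), where m ∈ Z^2 \ N·Z^2 and i ∈ Z^2 are fixed, α ∈ C^2. Then c(m+k, i+n) = c(m, i) for all k, n ∈ N·Z^2. -/
import Mathlib

lemma aux13 (A D U b : ℂ) (hU : U ≠ 0)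
    (E1 : A + b * D = 0)
    (H1 : (A + b * U = 0 ∧ A + U - b * U = 0) ∨
          (A + D + b * (U - D) = 0 ∧ A + U + b * (D - U) = 0))
    (H2 : (A + b * (2*U) = 0 ∧ A + 2*U - b * (2*U) = 0) ∨
          (A + D + b * (2*U - D) = 0 ∧ A + 2*U + b * (D - 2*U) = 0)) : False := by
  rcases H1 with ⟨s1a, s1b⟩ | ⟨t1a, t1b⟩ <;> rcases H2 with ⟨s2a, s2b⟩ | ⟨t2a, t2b⟩
  · exact hU (by linear_combination s1b + 2*s2a - 3*s1a)
  · have h' : U * (1 - 2*b) = 0 := by linear_combination s1b - s1a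
    rcases mul_eq_zero.mp h' with h | hb
    · exact hU h
    · exact hU (by linear_combination (1/2)*t2a + (1/2)*t2b - E1 - (D/2)*hb)
  · have h' : (2*U) * (1 - 2*b) = 0 := by linear_combination s2b - s2a
    rcases mul_eq_zero.mp h' with h | hb
    · exact mul_ne_zero two_ne_zero hU h
    · exact hU (by linear_combination t1a + t1b - 2*E1 - D*hb)
  · exact hU (by linear_combination t2a + t2b - t1a - t1b)

/-- Lemma 2.1(i), case `b_i = b_{i+m}`: if the coefficients `c` satisfy equation (2.7)
with `b_i = b_{i+m} = b` for all `k, n ∈ N·ℤ²` and all `∂`, then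
`c(m+k, i+n) = c(m, i)` for all `k, n ∈ N·ℤ²`. (Here `α ∉ ℤ²` guarantees all the
relevant weights are nonzero.) -/
theorem stmt_13 (N : ℕ) (hN : 2 ≤ N) (α : ℂ × ℂ)
    (hα : ∀ p : ℤ × ℤ, α ≠ (((p.1 : ℤ) : ℂ), ((p.2 : ℤ) : ℂ)))
    (i m : ℤ × ℤ) (hm : ¬((N : ℤ) ∣ m.1 ∧ (N : ℤ) ∣ m.2)) (b : ℂ)
    (c : ℤ × ℤ → ℤ × ℤ → ℂ)
    (h : ∀ k n : ℤ × ℤ, ∀ d : ℂ × ℂ,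
      (d.1 * (m.1 : ℂ) + d.2 * (m.2 : ℂ)) * c ((N : ℤ) • k + m) (i + (N : ℤ) • n) =
        (d.1 * (α.1 + (i.1 : ℂ) + (m.1 : ℂ) + (N : ℂ) * (n.1 : ℂ) + b * ((N : ℂ) * (k.1 : ℂ)))
          + d.2 * (α.2 + (i.2 : ℂ) + (m.2 : ℂ) + (N : ℂ) * (n.2 : ℂ) + b * ((N : ℂ) * (k.2 : ℂ))))
            * c m (i + (N : ℤ) • n)
        - (d.1 * (α.1 + (i.1 : ℂ) + (N : ℂ) * (n.1 : ℂ) + b * ((N : ℂ) * (k.1 : ℂ)))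
          + d.2 * (α.2 + (i.2 : ℂ) + (N : ℂ) * (n.2 : ℂ) + b * ((N : ℂ) * (k.2 : ℂ))))
            * c m (i + (N : ℤ) • k + (N : ℤ) • n)) :
    ∀ k n : ℤ × ℤ, c (m + (N : ℤ) • k) (i + (N : ℤ) • n) = c m i := by
  have hN0 : (N : ℂ) ≠ 0 := Nat.cast_ne_zero.mpr (by omega)
  have hm' : m.1 ≠ 0 ∨ m.2 ≠ 0 := by
    by_contra hc
    push_neg at hc
    exact hm ⟨hc.1 ▸ dvd_zero _, hc.2 ▸ dvd_zero _⟩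
  -- the key relation from ∂ ⊥ m
  have key : ∀ x y : ℤ × ℤ,
      ((m.2:ℂ) * (α.1 + (i.1:ℂ) + (N:ℂ)*(x.1:ℂ) + b*((N:ℂ)*((y.1 - x.1 : ℤ):ℂ)))
        - (m.1:ℂ) * (α.2 + (i.2:ℂ) + (N:ℂ)*(x.2:ℂ) + b*((N:ℂ)*((y.2 - x.2 : ℤ):ℂ))) ≠ 0) →
      c m (i + (N : ℤ) • y) = c m (i + (N : ℤ) • x) := by
    intro x y hco
    have hh := h (y - x) x ((m.2:ℂ), -(m.1:ℂ))
    dsimp only at hh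
    have hidx : i + (N:ℤ) • (y - x) + (N:ℤ) • x = i + (N:ℤ) • y := by
      rw [smul_sub]; abel
    rw [hidx] at hh
    push_cast [Prod.fst_sub, Prod.snd_sub] at hh hco ⊢
    apply mul_left_cancel₀ hco
    linear_combination hh
  -- constancy of c m on i + N·ℤ²
  have const : ∀ s t : ℤ × ℤ, c m (i + (N:ℤ) • s) = c m (i + (N:ℤ) • t) := by
    obtain ⟨e, hu⟩ : ∃ e : ℤ × ℤ, (m.2:ℂ) * (e.1:ℂ) - (m.1:ℂ) * (e.2:ℂ) ≠ 0 := by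
      by_cases h2 : m.2 = 0
      · have hm1 : m.1 ≠ 0 := by
          rcases hm' with h1 | h1
          · exact h1
          · exact absurd h2 h1
        refine ⟨(0, 1), ?_⟩
        show (m.2:ℂ) * ((0:ℤ):ℂ) - (m.1:ℂ) * ((1:ℤ):ℂ) ≠ 0
        simpa using Int.cast_ne_zero (α := ℂ).mpr hm1
      · refine ⟨(1, 0), ?_⟩
        show (m.2:ℂ) * ((1:ℤ):ℂ) - (m.1:ℂ) * ((0:ℤ):ℂ) ≠ 0
        simpa using Int.cast_ne_zero (α := ℂ).mpr h2
    intro s t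
    by_contra hst
    have step : ∀ x y : ℤ × ℤ, c m (i + (N:ℤ) • x) ≠ c m (i + (N:ℤ) • y) →
        ((m.2:ℂ) * (α.1 + (i.1:ℂ) + (N:ℂ)*(x.1:ℂ) + b*((N:ℂ)*((y.1 - x.1 : ℤ):ℂ)))
          - (m.1:ℂ) * (α.2 + (i.2:ℂ) + (N:ℂ)*(x.2:ℂ) + b*((N:ℂ)*((y.2 - x.2 : ℤ):ℂ))) = 0) ∧
        ((m.2:ℂ) * (α.1 + (i.1:ℂ) + (N:ℂ)*(y.1:ℂ) + b*((N:ℂ)*((x.1 - y.1 : ℤ):ℂ)))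
          - (m.1:ℂ) * (α.2 + (i.2:ℂ) + (N:ℂ)*(y.2:ℂ) + b*((N:ℂ)*((x.2 - y.2 : ℤ):ℂ))) = 0) := by
      intro x y hxy
      constructor
      · by_contra hc; exact hxy (key x y hc).symm
      · by_contra hc; exact hxy (key y x hc)
    have Hj : ∀ r : ℤ × ℤ, (c m (i + (N:ℤ) • s) ≠ c m (i + (N:ℤ) • r)) ∨
        (c m (i + (N:ℤ) • t) ≠ c m (i + (N:ℤ) • r)) := by
      intro r
      by_cases h1 : c m (i + (N:ℤ) • s) = c m (i + (N:ℤ) • r)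
      · exact Or.inr (fun h2 => hst (h1.trans h2.symm))
      · exact Or.inl h1
    refine aux13
      ((m.2:ℂ) * (α.1 + (i.1:ℂ) + (N:ℂ)*(s.1:ℂ)) - (m.1:ℂ) * (α.2 + (i.2:ℂ) + (N:ℂ)*(s.2:ℂ)))
      ((N:ℂ) * ((m.2:ℂ) * ((t.1:ℂ) - (s.1:ℂ)) - (m.1:ℂ) * ((t.2:ℂ) - (s.2:ℂ))))
      ((N:ℂ) * ((m.2:ℂ) * (e.1:ℂ) - (m.1:ℂ) * (e.2:ℂ)))
      b (mul_ne_zero hN0 hu) ?_ ?_ ?_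
    · have h1 := (step s t hst).1
      push_cast at h1
      linear_combination h1
    · rcases Hj (s + e) with h1 | h1
      · left
        obtain ⟨ha, hb2⟩ := step s (s + e) h1
        push_cast [Prod.fst_add, Prod.snd_add] at ha hb2
        exact ⟨by linear_combination ha, by linear_combination hb2⟩
      · right
        obtain ⟨ha, hb2⟩ := step t (s + e) h1
        push_cast [Prod.fst_add, Prod.snd_add] at ha hb2
        exact ⟨by linear_combination ha, by linear_combination hb2⟩
    · rcases Hj (s + e + e) with h1 | h1
      · left
        obtain ⟨ha, hb2⟩ := step s (s + e + e) h1
        push_cast [Prod.fst_add, Prod.snd_add] at ha hb2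
        exact ⟨by linear_combination ha, by linear_combination hb2⟩
      · right
        obtain ⟨ha, hb2⟩ := step t (s + e + e) h1
        push_cast [Prod.fst_add, Prod.snd_add] at ha hb2
        exact ⟨by linear_combination ha, by linear_combination hb2⟩
  -- conclude using ∂ = (m1, m2)
  intro k n
  have hc1 : c m (i + (N:ℤ) • n) = c m i := by simpa using const n 0
  have hc2 : c m (i + (N:ℤ) • k + (N:ℤ) • n) = c m i := by
    have h0 := const (k + n) 0
    have hidx : i + (N:ℤ) • (k + n) = i + (N:ℤ) • k + (N:ℤ) • n := by
      rw [smul_add, add_assoc]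
    rw [hidx] at h0
    simpa using h0
  have hh := h k n ((m.1:ℂ), (m.2:ℂ))
  dsimp only at hh
  rw [hc1, hc2] at hh
  have hmm2 : (m.1:ℂ) * (m.1:ℂ) + (m.2:ℂ) * (m.2:ℂ) ≠ 0 := by
    have hz : (0:ℤ) < m.1 * m.1 + m.2 * m.2 := by
      rcases hm' with h1 | h1
      · nlinarith [mul_self_nonneg m.2, mul_self_pos.mpr h1]
      · nlinarith [mul_self_nonneg m.1, mul_self_pos.mpr h1]
    have : ((m.1 * m.1 + m.2 * m.2 : ℤ) : ℂ) ≠ 0 := Int.cast_ne_zero.mpr hz.ne'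
    push_cast at this
    exact this
  have hfin : c ((N:ℤ) • k + m) (i + (N:ℤ) • n) = c m i := by
    apply mul_left_cancel₀ hmm2
    linear_combination hh
  rw [add_comm m ((N:ℤ) • k)]
  exact hfin
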